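/- For H ∈ (0,1), the function R_H(t,s) = (1/2)(t^{2H} + s^{2H} - |t-s|^{2H}) is positive semidefinite on ℝ≥0: for any finite collection t_1,…,t_n ≥ 0 and reals a_1,…,a_n, we have ∑_{i,j} a_i a_j R_H(t_i,t_j) ≥ 0. -/

import Mathlib

open MeasureTheory Real Set

lemma one_sub_cos_le_half_sq (x : ℝ) : 1 - Real.cos x ≤ x ^ 2 / 2 := by
  have h1 : Real.cos (x/2) ^ 2 = 1/2 + Real.cos x / 2 := by
    have := Real.cos_sq (x/2); rw [show 2*(x/2) = x by ring] at this; linarith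
  have h2 := Real.sin_sq_add_cos_sq (x/2)
  have h3 : Real.sin (x/2) ^ 2 ≤ (x/2) ^ 2 := by
    calc Real.sin (x/2) ^ 2 = |Real.sin (x/2)| ^ 2 := (sq_abs _).symm
      _ ≤ |x/2| ^ 2 := pow_le_pow_left₀ (abs_nonneg _) Real.abs_sin_le_abs 2
      _ = (x/2) ^ 2 := sq_abs _
  nlinarith

lemma aesm_g (c : ℝ) (u : ℝ) :
    AEStronglyMeasurable (fun x : ℝ => (1 - Real.cos (u * x)) * x ^ c)
      (volume.restrict (Ioi (0:ℝ))) := by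
  refine ContinuousOn.aestronglyMeasurable ?_ measurableSet_Ioi
  exact (continuousOn_const.sub ((Real.continuous_cos.comp
      (continuous_const.mul continuous_id)).continuousOn)).mul
    (continuousOn_id.rpow_const fun x hx => Or.inl (ne_of_gt hx))

lemma integrable_g {α : ℝ} (hα0 : 0 < α) (hα2 : α < 2) :
    IntegrableOn (fun x : ℝ => (1 - Real.cos x) * x ^ (-1 - α)) (Ioi 0) := by
  have h1 : IntegrableOn (fun x : ℝ => (1 - Real.cos x) * x ^ (-1 - α)) (Ioc 0 1) := by
    have hi : IntegrableOn (fun x : ℝ => x ^ (1 - α)) (Ioc 0 1) := by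
      have := (intervalIntegral.integrableOn_Ioo_rpow_iff (s := 1 - α) zero_lt_one).2
        (by linarith)
      exact this.congr_set_ae Ioo_ae_eq_Ioc.symm
    refine (hi.const_mul (1/2)).mono'
      (((aesm_g (-1-α) 1).mono_set (Ioc_subset_Ioi_self.trans ?_)).congr ?_) ?_
    · exact fun x hx => hx
    · filter_upwards with x; simp
    filter_upwards [ae_restrict_mem measurableSet_Ioc] with x hx
    have hx0 : 0 < x := hx.1
    have hb := one_sub_cos_le_half_sq x
    have hcos : Real.cos x ≤ 1 := Real.cos_le_one x
    have hxpow : (0:ℝ) ≤ x ^ (-1 - α) := Real.rpow_nonneg hx0.le _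
    rw [Real.norm_eq_abs, abs_of_nonneg (mul_nonneg (by linarith) hxpow)]
    have key : x ^ 2 * x ^ (-1 - α) = x ^ (1 - α) := by
      rw [← Real.rpow_natCast x 2, ← Real.rpow_add hx0]; congr 1; push_cast; ring
    calc (1 - Real.cos x) * x ^ (-1 - α) ≤ (x^2/2) * x ^ (-1-α) :=
          mul_le_mul_of_nonneg_right hb hxpow
      _ = 1/2 * (x ^ (1-α)) := by rw [← key]; ring
  have h2 : IntegrableOn (fun x : ℝ => (1 - Real.cos x) * x ^ (-1 - α)) (Ioi 1) := by
    have hi : IntegrableOn (fun x : ℝ => x ^ (-1 - α)) (Ioi 1) :=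
      integrableOn_Ioi_rpow_of_lt (by linarith) one_pos
    refine (hi.const_mul 2).mono'
      (((aesm_g (-1-α) 1).mono_set (Ioi_subset_Ioi zero_le_one)).congr ?_) ?_
    · filter_upwards with x; simp
    filter_upwards [ae_restrict_mem measurableSet_Ioi] with x hx
    have hx0 : (0:ℝ) < x := lt_trans one_pos hx
    have hcos : Real.cos x ≤ 1 := Real.cos_le_one x
    have hcos' : -1 ≤ Real.cos x := Real.neg_one_le_cos x
    have hxpow : (0:ℝ) ≤ x ^ (-1 - α) := Real.rpow_nonneg hx0.le _
    rw [Real.norm_eq_abs, abs_of_nonneg (mul_nonneg (by linarith) hxpow)]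
    nlinarith
  have : Ioi (0:ℝ) = Ioc 0 1 ∪ Ioi 1 := (Ioc_union_Ioi_eq_Ioi zero_le_one).symm
  rw [this]; exact h1.union h2

lemma integrand_eq {α : ℝ} (hα0 : 0 < α) {u : ℝ} (hu : u ≠ 0) {x : ℝ} (hx : x ∈ Ioi (0:ℝ)) :
    (1 - Real.cos (u * x)) * x ^ (-1 - α)
      = |u| ^ (1 + α) * ((1 - Real.cos (|u| * x)) * (|u| * x) ^ (-1 - α)) := by
  have hb : 0 < |u| := abs_pos.2 hu
  have hx0 : 0 < x := hx
  have hcos : Real.cos (|u| * x) = Real.cos (u * x) := by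
    rcases abs_choice u with h | h
    · rw [h]
    · rw [h, neg_mul, Real.cos_neg]
  rw [hcos, Real.mul_rpow hb.le hx0.le]
  have : |u| ^ (1 + α) * |u| ^ (-1 - α) = 1 := by
    rw [← Real.rpow_add hb]; norm_num
  calc (1 - Real.cos (u*x)) * x ^ (-1-α)
      = (|u| ^ (1+α) * |u| ^ (-1-α)) * ((1 - Real.cos (u*x)) * x ^ (-1-α)) := by
        rw [this, one_mul]
    _ = |u| ^ (1+α) * ((1 - Real.cos (u*x)) * (|u| ^ (-1-α) * x ^ (-1-α))) := by ring

lemma integrable_gu {α : ℝ} (hα0 : 0 < α) (hα2 : α < 2) (u : ℝ) :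
    IntegrableOn (fun x : ℝ => (1 - Real.cos (u * x)) * x ^ (-1 - α)) (Ioi 0) := by
  rcases eq_or_ne u 0 with rfl | hu
  · have : (fun x : ℝ => (1 - Real.cos (0 * x)) * x ^ (-1 - α)) = fun _ => (0:ℝ) := by
      funext x; simp
    rw [this]; exact integrableOn_zero
  have hb : 0 < |u| := abs_pos.2 hu
  have h1 : IntegrableOn (fun x : ℝ => (1 - Real.cos (|u| * x)) * (|u| * x) ^ (-1 - α))
      (Ioi 0) := by
    have := (integrableOn_Ioi_comp_mul_left_iff
      (fun y : ℝ => (1 - Real.cos y) * y ^ (-1 - α)) 0 hb).2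
    rw [mul_zero] at this
    exact this (integrable_g hα0 hα2)
  exact (IntegrableOn.congr_fun (h1.const_mul (|u| ^ (1 + α)))
    (fun x hx => (integrand_eq hα0 hu hx).symm) measurableSet_Ioi)

lemma scaling {α : ℝ} (hα0 : 0 < α) (hα2 : α < 2) (u : ℝ) :
    (∫ x in Ioi (0:ℝ), (1 - Real.cos (u * x)) * x ^ (-1 - α))
      = |u| ^ α * ∫ x in Ioi (0:ℝ), (1 - Real.cos x) * x ^ (-1 - α) := by
  rcases eq_or_ne u 0 with rfl | hu
  · simp [Real.zero_rpow hα0.ne']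
  have hb : 0 < |u| := abs_pos.2 hu
  calc (∫ x in Ioi (0:ℝ), (1 - Real.cos (u * x)) * x ^ (-1 - α))
      = ∫ x in Ioi (0:ℝ),
          |u| ^ (1 + α) * ((1 - Real.cos (|u| * x)) * (|u| * x) ^ (-1 - α)) :=
        setIntegral_congr_fun measurableSet_Ioi fun x hx => integrand_eq hα0 hu hx
    _ = |u| ^ (1 + α) * ∫ x in Ioi (0:ℝ),
          (1 - Real.cos (|u| * x)) * (|u| * x) ^ (-1 - α) := integral_const_mul _ _
    _ = |u| ^ (1 + α) * (|u|⁻¹ * ∫ y in Ioi (0:ℝ), (1 - Real.cos y) * y ^ (-1 - α)) := by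
        have := integral_comp_mul_left_Ioi
          (fun y : ℝ => (1 - Real.cos y) * y ^ (-1 - α)) 0 hb
        rw [mul_zero] at this
        rw [this, smul_eq_mul]
    _ = |u| ^ α * ∫ x in Ioi (0:ℝ), (1 - Real.cos x) * x ^ (-1 - α) := by
        rw [← mul_assoc, ← Real.rpow_neg_one |u|, ← Real.rpow_add hb]
        norm_num

lemma c_pos {α : ℝ} (hα0 : 0 < α) (hα2 : α < 2) :
    0 < ∫ x in Ioi (0:ℝ), (1 - Real.cos x) * x ^ (-1 - α) := by
  rw [setIntegral_pos_iff_support_of_nonneg_ae ?_ (integrable_g hα0 hα2)]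
  · refine lt_of_lt_of_le ?_ (measure_mono (?_ :
      Ioo (0:ℝ) π ⊆ Function.support (fun x => (1 - Real.cos x) * x ^ (-1 - α)) ∩ Ioi 0))
    · rw [Real.volume_Ioo]
      simp [ENNReal.ofReal_pos, Real.pi_pos]
    · intro x hx
      have hx0 : 0 < x := hx.1
      have hcos : Real.cos x < 1 := by
        have := Real.cos_lt_cos_of_nonneg_of_le_pi le_rfl hx.2.le hx0
        simpa using this
      refine ⟨?_, hx0⟩
      have : 0 < (1 - Real.cos x) * x ^ (-1 - α) :=
        mul_pos (by linarith) (Real.rpow_pos_of_pos hx0 _)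
      exact ne_of_gt this
  · filter_upwards [ae_restrict_mem measurableSet_Ioi] with x hx
    exact mul_nonneg (by linarith [Real.cos_le_one x]) (Real.rpow_nonneg (le_of_lt hx) _)

lemma sum_sq_identity {n : ℕ} (P Q : Fin n → ℝ) (w : ℝ) :
    ∑ i, ∑ j, (P i * P j + Q i * Q j) * w = ((∑ i, P i)^2 + (∑ i, Q i)^2) * w := by
  rw [sq, sq, Finset.sum_mul_sum, Finset.sum_mul_sum, add_mul,
    Finset.sum_mul, Finset.sum_mul, ← Finset.sum_add_distrib]
  refine Finset.sum_congr rfl fun i _ => ?_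
  rw [Finset.sum_mul, Finset.sum_mul, ← Finset.sum_add_distrib]
  exact Finset.sum_congr rfl fun j _ => by ring

noncomputable def RH (H t s : ℝ) : ℝ :=
  (1 / 2) * (t ^ (2 * H) + s ^ (2 * H) - |t - s| ^ (2 * H))

/-- The fBm covariance function is positive semidefinite on ℝ≥0. -/
theorem RH_posSemidef (H : ℝ) (hH : H ∈ Set.Ioo (0 : ℝ) 1)
    (n : ℕ) (t : Fin n → ℝ) (ht : ∀ i, 0 ≤ t i) (a : Fin n → ℝ) :
    0 ≤ ∑ i, ∑ j, a i * a j * RH H (t i) (t j) := by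
  obtain ⟨hH0, hH1⟩ := hH
  set α : ℝ := 2 * H with hα
  have hα0 : 0 < α := by positivity
  have hα2 : α < 2 := by rw [hα]; linarith
  set c : ℝ := ∫ x in Ioi (0:ℝ), (1 - Real.cos x) * x ^ (-1 - α) with hc
  have hcpos : 0 < c := c_pos hα0 hα2
  set f : Fin n → Fin n → ℝ → ℝ := fun i j x =>
    ((1 - Real.cos (t i * x)) + (1 - Real.cos (t j * x))
      - (1 - Real.cos ((t i - t j) * x))) * x ^ (-1 - α) with hf
  have hint : ∀ i j, IntegrableOn (f i j) (Ioi 0) := by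
    intro i j
    have h1 := integrable_gu hα0 hα2 (t i)
    have h2 := integrable_gu hα0 hα2 (t j)
    have h3 := integrable_gu hα0 hα2 (t i - t j)
    refine IntegrableOn.congr_fun ((h1.add h2).sub h3) ?_ measurableSet_Ioi
    intro x _
    simp only [hf, Pi.add_apply, Pi.sub_apply]
    ring
  have hval : ∀ i j, ∫ x in Ioi (0:ℝ), f i j x
      = (|t i| ^ α + |t j| ^ α - |t i - t j| ^ α) * c := by
    intro i j
    have h1 := integrable_gu hα0 hα2 (t i)
    have h2 := integrable_gu hα0 hα2 (t j)
    have h3 := integrable_gu hα0 hα2 (t i - t j)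
    have hfe : f i j = fun x =>
        (1 - Real.cos (t i * x)) * x ^ (-1 - α)
          + (1 - Real.cos (t j * x)) * x ^ (-1 - α)
          - (1 - Real.cos ((t i - t j) * x)) * x ^ (-1 - α) := by
      funext x; simp only [hf]; ring
    have h12 : IntegrableOn (fun x : ℝ => (1 - Real.cos (t i * x)) * x ^ (-1 - α)
        + (1 - Real.cos (t j * x)) * x ^ (-1 - α)) (Ioi 0) := h1.add h2
    rw [hfe]
    beta_reduce
    rw [integral_sub h12 h3, integral_add h1 h2,
      scaling hα0 hα2 (t i), scaling hα0 hα2 (t j), scaling hα0 hα2 (t i - t j)]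
    ring
  -- nonnegativity of the big integral
  have hswap : ∑ i, ∑ j, a i * a j * ∫ x in Ioi (0:ℝ), f i j x
      = ∫ x in Ioi (0:ℝ), ∑ i, ∑ j, a i * a j * f i j x := by
    have h1 : ∀ i j, a i * a j * ∫ x in Ioi (0:ℝ), f i j x
        = ∫ x in Ioi (0:ℝ), a i * a j * f i j x := fun i j =>
      (integral_const_mul _ _).symm
    calc ∑ i, ∑ j, a i * a j * ∫ x in Ioi (0:ℝ), f i j x
        = ∑ i, ∫ x in Ioi (0:ℝ), ∑ j, a i * a j * f i j x := by
          refine Finset.sum_congr rfl fun i _ => ?_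
          calc ∑ j, a i * a j * ∫ x in Ioi (0:ℝ), f i j x
              = ∑ j, ∫ x in Ioi (0:ℝ), a i * a j * f i j x :=
                Finset.sum_congr rfl fun j _ => h1 i j
            _ = ∫ x in Ioi (0:ℝ), ∑ j, a i * a j * f i j x :=
                (integral_finset_sum _ fun j _ => (hint i j).const_mul _).symm
      _ = ∫ x in Ioi (0:ℝ), ∑ i, ∑ j, a i * a j * f i j x := by
          rw [← integral_finset_sum]
          exact fun i _ => integrable_finset_sum _ fun j _ => (hint i j).const_mul _
  have hnonneg : 0 ≤ ∫ x in Ioi (0:ℝ), ∑ i, ∑ j, a i * a j * f i j x := by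
    refine setIntegral_nonneg measurableSet_Ioi fun x hx => ?_
    have hterm : ∀ i j, a i * a j * f i j x
        = ((a i * (1 - Real.cos (t i * x))) * (a j * (1 - Real.cos (t j * x)))
            + (a i * Real.sin (t i * x)) * (a j * Real.sin (t j * x))) * x ^ (-1 - α) := by
      intro i j
      have hsub : (t i - t j) * x = t i * x - t j * x := by ring
      simp only [hf, hsub, Real.cos_sub]
      ring
    have : ∑ i, ∑ j, a i * a j * f i j x
        = ((∑ i, a i * (1 - Real.cos (t i * x)))^2
            + (∑ i, a i * Real.sin (t i * x))^2) * x ^ (-1 - α) := by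
      rw [← sum_sq_identity]
      exact Finset.sum_congr rfl fun i _ => Finset.sum_congr rfl fun j _ => hterm i j
    rw [this]
    have hw : (0:ℝ) ≤ x ^ (-1 - α) := Real.rpow_nonneg (le_of_lt hx) _
    positivity
  -- assemble
  have key : ∑ i, ∑ j, a i * a j * RH H (t i) (t j)
      = (∑ i, ∑ j, a i * a j * ∫ x in Ioi (0:ℝ), f i j x) / (2 * c) := by
    rw [Finset.sum_div]
    refine Finset.sum_congr rfl fun i _ => ?_
    rw [Finset.sum_div]
    refine Finset.sum_congr rfl fun j _ => ?_
    rw [hval i j]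
    have hti : |t i| = t i := abs_of_nonneg (ht i)
    have htj : |t j| = t j := abs_of_nonneg (ht j)
    rw [RH, hti, htj, ← hα]
    field_simp
  rw [key, hswap]
  positivity
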